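/- Let h be a random vector in ℝ^d and z a {0,1}-valued random variable. Let η(h) = wᵀh + b be a linear predictor and L(η, z) a convex loss function that is monotonically decreasing in η when z = 1 and monotonically increasing in η when z = 0. Let μ₁ = E[h | z=1], μ₀ = E[h | z=0], and δ = μ₁ - μ₀. If wᵀδ ≤ 0, then E[L(η(h), z)] ≥ inf over constants c of E[L(c, z)], i.e., the predictor does no better than the best constant predictor. -/

import Mathlib

open MeasureTheory ProbabilityTheory
open scoped RealInnerProductSpace

lemma cond_smul_integral_aux {Ω : Type*} [MeasurableSpace Ω] (μ : Measure Ω)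
    [IsFiniteMeasure μ] {s : Set Ω} {E : Type*} [NormedAddCommGroup E] [NormedSpace ℝ E]
    (f : Ω → E) (hs0 : μ s ≠ 0) :
    (μ s).toReal • ∫ x, f x ∂(μ[|s]) = ∫ x in s, f x ∂μ := by
  rw [ProbabilityTheory.cond, integral_smul_measure, smul_smul, ENNReal.toReal_inv,
    mul_inv_cancel₀, one_smul]
  exact ENNReal.toReal_ne_zero.mpr ⟨hs0, measure_ne_top μ s⟩

lemma integrable_cond_aux {Ω : Type*} [MeasurableSpace Ω] {μ : Measure Ω}
    {s : Set Ω} {E : Type*} [NormedAddCommGroup E]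
    {f : Ω → E} (hf : Integrable f μ) (hs0 : μ s ≠ 0) :
    Integrable f (μ[|s]) := by
  rw [ProbabilityTheory.cond]
  exact (hf.restrict).smul_measure (ENNReal.inv_ne_top.mpr hs0)

/-- If the linear predictor's weight vector has nonpositive inner product with the
difference of class-conditional means, then its expected convex monotonic loss is at
least the trivially attainable (best constant-predictor) loss. -/
theorem stmt0 {Ω : Type*} [MeasurableSpace Ω] {d : ℕ}
    (μ : Measure Ω) [IsProbabilityMeasure μ]
    (h : Ω → EuclideanSpace ℝ (Fin d)) (z : Ω → Bool)
    (w : EuclideanSpace ℝ (Fin d)) (b : ℝ)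
    (L : ℝ → Bool → ℝ)
    (hconv : ∀ j, ConvexOn ℝ Set.univ (fun α => L α j))
    (hanti : Antitone fun α => L α true)
    (hmono : Monotone fun α => L α false)
    (hz : Measurable z)
    (hh : Integrable h μ)
    (hp1 : 0 < μ (z ⁻¹' {true})) (hp0 : 0 < μ (z ⁻¹' {false}))
    (hLint : Integrable (fun ω => L (⟪w, h ω⟫ + b) (z ω)) μ)
    (hLcint : ∀ c : ℝ, Integrable (fun ω => L c (z ω)) μ)
    (hδ : ⟪w, (∫ ω, h ω ∂(μ[|z ⁻¹' {true}])) - (∫ ω, h ω ∂(μ[|z ⁻¹' {false}]))⟫ ≤ 0) :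
    ∀ ℓ : ℝ, (∀ c : ℝ, ℓ ≤ ∫ ω, L c (z ω) ∂μ) →
      ℓ ≤ ∫ ω, L (⟪w, h ω⟫ + b) (z ω) ∂μ := by
  intro ℓ hℓ
  set A : Set Ω := z ⁻¹' {true} with hA
  have mA : MeasurableSet A := hz (measurableSet_singleton true)
  have hAc : Aᶜ = z ⁻¹' {false} := by
    ext ω
    simp [hA, Bool.not_eq_true]
  have hA0 : μ A ≠ 0 := hp1.ne'
  have hAc0 : μ Aᶜ ≠ 0 := by rw [hAc]; exact hp0.ne'
  set p : ℝ := (μ A).toReal with hp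
  set q : ℝ := (μ Aᶜ).toReal with hq
  have hppos : 0 < p := ENNReal.toReal_pos hA0 (measure_ne_top μ A)
  have hqpos : 0 < q := ENNReal.toReal_pos hAc0 (measure_ne_top μ Aᶜ)
  have hpq : p + q = 1 := by
    rw [hp, hq, ← ENNReal.toReal_add (measure_ne_top μ A) (measure_ne_top μ Aᶜ),
      measure_add_measure_compl mA, measure_univ, ENNReal.toReal_one]
  -- conditional probability measures
  haveI i1 : IsProbabilityMeasure (μ[|A]) := cond_isProbabilityMeasure hA0
  haveI i0 : IsProbabilityMeasure (μ[|Aᶜ]) := cond_isProbabilityMeasure hAc0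
  set η : Ω → ℝ := fun ω => ⟪w, h ω⟫ + b with hη
  have hηint : Integrable η μ := (hh.const_inner w).add (integrable_const b)
  set m1 : EuclideanSpace ℝ (Fin d) := ∫ ω, h ω ∂(μ[|A]) with hm1
  set m0 : EuclideanSpace ℝ (Fin d) := ∫ ω, h ω ∂(μ[|Aᶜ]) with hm0
  -- mean of η under conditional measures
  have hmean : ∀ (s : Set Ω), μ s ≠ 0 → IsProbabilityMeasure (μ[|s]) →
      ∫ ω, η ω ∂(μ[|s]) = ⟪w, ∫ ω, h ω ∂(μ[|s])⟫ + b := by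
    intro s hs0 hps
    rw [hη]
    rw [integral_add ((integrable_cond_aux hh hs0).const_inner w) (integrable_const b),
      integral_inner (integrable_cond_aux hh hs0), integral_const, measureReal_def, measure_univ,
      ENNReal.toReal_one, one_smul]
  -- decomposition of the mean of h
  have hmeandecomp : ⟪w, ∫ ω, h ω ∂μ⟫ = p * ⟪w, m1⟫ + q * ⟪w, m0⟫ := by
    have := integral_add_compl mA hh
    rw [← cond_smul_integral_aux μ h hA0, ← cond_smul_integral_aux μ h hAc0] at this
    rw [← this, inner_add_right, real_inner_smul_right, real_inner_smul_right]
  have hineq10 : ⟪w, m1⟫ ≤ ⟪w, m0⟫ := by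
    rw [← hAc, inner_sub_right] at hδ
    linarith
  set c : ℝ := ⟪w, ∫ ω, h ω ∂μ⟫ + b with hc
  have hrw1 : p * ⟪w, m1⟫ + q * ⟪w, m0⟫ = ⟪w, m1⟫ + q * (⟪w, m0⟫ - ⟪w, m1⟫) := by
    have hp' : p = 1 - q := by linarith
    rw [hp']; ring
  have hrw0 : p * ⟪w, m1⟫ + q * ⟪w, m0⟫ = ⟪w, m0⟫ - p * (⟪w, m0⟫ - ⟪w, m1⟫) := by
    have hq' : q = 1 - p := by linarith
    rw [hq']; ring
  have hc1 : ⟪w, m1⟫ + b ≤ c := by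
    rw [hc, hmeandecomp, hrw1]
    linarith [mul_nonneg hqpos.le (sub_nonneg.2 hineq10)]
  have hc0 : c ≤ ⟪w, m0⟫ + b := by
    rw [hc, hmeandecomp, hrw0]
    linarith [mul_nonneg hppos.le (sub_nonneg.2 hineq10)]
  -- Jensen on each conditional measure
  have jensen : ∀ (s : Set Ω) (j : Bool), μ s ≠ 0 → IsProbabilityMeasure (μ[|s]) →
      Integrable (fun ω => L (η ω) j) (μ[|s]) →
      L (∫ ω, η ω ∂(μ[|s])) j ≤ ∫ ω, L (η ω) j ∂(μ[|s]) := by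
    intro s j hs0 hps hgi
    exact (hconv j).map_integral_le ((hconv j).continuousOn isOpen_univ) isClosed_univ
      (Filter.Eventually.of_forall fun _ => Set.mem_univ _)
      (integrable_cond_aux hηint hs0) hgi
  -- integrability of L(η) j on conditional measures
  have hLA : Integrable (fun ω => L (η ω) true) (μ[|A]) := by
    refine (integrable_cond_aux hLint hA0).congr ?_
    rw [ProbabilityTheory.cond]
    refine Measure.ae_smul_measure ?_ _
    filter_upwards [ae_restrict_mem mA] with ω hω
    rw [show z ω = true from hω]
  have hLAc : Integrable (fun ω => L (η ω) false) (μ[|Aᶜ]) := by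
    refine (integrable_cond_aux hLint hAc0).congr ?_
    rw [ProbabilityTheory.cond]
    refine Measure.ae_smul_measure ?_ _
    filter_upwards [ae_restrict_mem mA.compl] with ω hω
    rw [show z ω = false from by rw [hAc] at hω; exact hω]
  -- split total expected loss
  have split : ∫ ω, L (η ω) (z ω) ∂μ
      = p • (∫ ω, L (η ω) true ∂(μ[|A])) + q • (∫ ω, L (η ω) false ∂(μ[|Aᶜ])) := by
    rw [cond_smul_integral_aux μ _ hA0, cond_smul_integral_aux μ _ hAc0]
    rw [← integral_add_compl mA hLint]
    congr 1
    · refine setIntegral_congr_fun mA fun ω hω => ?_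
      have : z ω = true := hω
      rw [this]
    · refine setIntegral_congr_fun mA.compl fun ω hω => ?_
      have : z ω = false := by rw [hAc] at hω; exact hω
      rw [this]
  have splitc : ∫ ω, L c (z ω) ∂μ = p * L c true + q * L c false := by
    rw [← integral_add_compl mA (hLcint c)]
    congr 1
    · rw [show (∫ ω in A, L c (z ω) ∂μ) = ∫ _ in A, L c true ∂μ from
        setIntegral_congr_fun mA fun ω hω => by rw [show z ω = true from hω],
        setIntegral_const, smul_eq_mul]
      rfl
    · rw [show (∫ ω in Aᶜ, L c (z ω) ∂μ) = ∫ _ in Aᶜ, L c false ∂μ from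
        setIntegral_congr_fun mA.compl fun ω hω => by
          rw [show z ω = false from by rw [hAc] at hω; exact hω],
        setIntegral_const, smul_eq_mul]
      rfl
  have j1 := jensen A true hA0 i1 hLA
  have j0 := jensen Aᶜ false hAc0 i0 hLAc
  rw [hmean A hA0 i1, ← hm1] at j1
  rw [hmean Aᶜ hAc0 i0, ← hm0] at j0
  have mono1 : L c true ≤ L (⟪w, m1⟫ + b) true := hanti hc1
  have mono0 : L c false ≤ L (⟪w, m0⟫ + b) false := hmono hc0
  calc ℓ ≤ ∫ ω, L c (z ω) ∂μ := hℓ c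
    _ = p * L c true + q * L c false := splitc
    _ ≤ p * L (⟪w, m1⟫ + b) true + q * L (⟪w, m0⟫ + b) false := by nlinarith
    _ ≤ p * (∫ ω, L (η ω) true ∂(μ[|A])) + q * (∫ ω, L (η ω) false ∂(μ[|Aᶜ])) := by nlinarith
    _ = ∫ ω, L (η ω) (z ω) ∂μ := by rw [split]; simp [smul_eq_mul]
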